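/- Let E be a real normed vector space. Let P₁, …, Pₙ be finitely many finite subsets of E such that each Pⱼ is contained in the open ball of radius εⱼ > 0 about some point cⱼ of E, and such that for every pair of indices i, k there is a sequence Pᵢ = P_{j₁}, P_{j₂}, …, P_{j_m} = P_k in which the consecutive sets P_{j_r} and P_{j_{r+1}} have at least one point in common. Then the union P₁ ∪ ⋯ ∪ Pₙ is contained in an open ball of radius ε₁ + ⋯ + εₙ about some point of E. -/

import Mathlib

/-- Auxiliary: finsets of indices built by starting from a singleton and repeatedly
adding a vertex adjacent to the current set. -/
inductive GoodChain {n : ℕ} (Adj : Fin n → Fin n → Prop) : Finset (Fin n) → Prop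
  | single (i : Fin n) : GoodChain Adj {i}
  | grow {s : Finset (Fin n)} {m ℓ : Fin n} (hs : GoodChain Adj s) (hm : m ∈ s)
      (hadj : Adj m ℓ) : GoodChain Adj (insert ℓ s)

lemma GoodChain.nonempty {n} {Adj : Fin n → Fin n → Prop} {s} (h : GoodChain Adj s) :
    s.Nonempty := by
  induction h with
  | single i => exact ⟨i, Finset.mem_singleton_self i⟩
  | grow hs hm hadj ih => exact ⟨_, Finset.mem_insert_self _ _⟩

lemma GoodChain.mono {n} {A B : Fin n → Fin n → Prop} (hAB : ∀ i k, A i k → B i k)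
    {s} (h : GoodChain A s) : GoodChain B s := by
  induction h with
  | single i => exact .single i
  | grow hs hm hadj ih => exact .grow ih hm (hAB _ _ hadj)

lemma exists_crossing {m : ℕ} (f : Fin (m + 1) → Prop) (h0 : f 0)
    (hl : ¬ f (Fin.last m)) : ∃ r : Fin m, f r.castSucc ∧ ¬ f r.succ := by
  by_contra h
  push_neg at h
  exact hl (Fin.induction h0 (fun i hi => h i hi) (Fin.last m))

lemma goodchain_univ {n : ℕ} (hn : 0 < n) (Adj : Fin n → Fin n → Prop)
    (hchain : ∀ i k : Fin n, ∃ (m : ℕ) (j : Fin (m + 1) → Fin n),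
      j 0 = i ∧ j (Fin.last m) = k ∧ ∀ r : Fin m, Adj (j r.castSucc) (j r.succ)) :
    GoodChain Adj (Finset.univ : Finset (Fin n)) := by
  suffices H : ∀ d (s : Finset (Fin n)), GoodChain Adj s →
      (Finset.univ \ s).card ≤ d → GoodChain Adj Finset.univ by
    exact H n {⟨0, hn⟩} (.single _)
      (le_trans (Finset.card_le_card Finset.sdiff_subset) (by simp))
  intro d
  induction d with
  | zero =>
    intro s hs h0
    have hempty : Finset.univ \ s = ∅ := Finset.card_eq_zero.mp (Nat.le_zero.mp h0)
    have hsub : (Finset.univ : Finset (Fin n)) ⊆ s := by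
      intro x hx
      by_contra hxs
      have : x ∈ Finset.univ \ s := Finset.mem_sdiff.mpr ⟨hx, hxs⟩
      simp [hempty] at this
    have : s = Finset.univ := Finset.eq_univ_iff_forall.mpr fun x => hsub (Finset.mem_univ x)
    rwa [this] at hs
  | succ d ih =>
    intro s hs hcard
    by_cases hsu : s = Finset.univ
    · rwa [hsu] at hs
    · obtain ⟨k, hk⟩ : ∃ k, k ∉ s := by
        by_contra h
        push_neg at h
        exact hsu (Finset.eq_univ_iff_forall.mpr h)
      obtain ⟨i, hi⟩ := hs.nonempty
      obtain ⟨m, j, hj0, hjl, hjadj⟩ := hchain i k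
      obtain ⟨r, hr1, hr2⟩ := exists_crossing (fun r => j r ∈ s)
        (by show j 0 ∈ s; rw [hj0]; exact hi)
        (by show ¬ j (Fin.last m) ∈ s; rw [hjl]; exact hk)
      have hs' : GoodChain Adj (insert (j r.succ) s) := .grow hs hr1 (hjadj r)
      apply ih (insert (j r.succ) s) hs'
      have hss : Finset.univ \ insert (j r.succ) s ⊂ Finset.univ \ s := by
        apply Finset.ssubset_iff_of_subset (Finset.sdiff_subset_sdiff le_rfl
          (Finset.subset_insert _ _)) |>.mpr
        exact ⟨j r.succ, Finset.mem_sdiff.mpr ⟨Finset.mem_univ _, hr2⟩,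
          by simp [Finset.mem_insert_self]⟩
      have := Finset.card_lt_card hss
      omega

lemma goodchain_center {E : Type*} [NormedAddCommGroup E] [NormedSpace ℝ E] {n : ℕ}
    (ε : Fin n → ℝ) (hε : ∀ i, 0 < ε i) (c : Fin n → E) {s : Finset (Fin n)}
    (hs : GoodChain (fun i k => dist (c i) (c k) < ε i + ε k) s) :
    ∃ y : E, ∀ i ∈ s, dist y (c i) ≤ (∑ j ∈ s, ε j) - ε i := by
  induction hs with
  | single i => exact ⟨c i, by simp⟩
  | @grow s m ℓ hs hm hadj ih =>
    obtain ⟨y', hy'⟩ := ih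
    by_cases hℓ : ℓ ∈ s
    · rw [Finset.insert_eq_self.mpr hℓ]
      exact ⟨y', hy'⟩
    · rw [Finset.sum_insert hℓ]
      set S' := ∑ j ∈ s, ε j with hS'
      have hym : dist y' (c m) ≤ S' - ε m := hy' m hm
      have hS'pos : 0 < S' := by
        have := dist_nonneg (x := y') (y := c m)
        have := hε m
        linarith
      have hdb : dist y' (c ℓ) < S' + ε ℓ := by
        calc dist y' (c ℓ) ≤ dist y' (c m) + dist (c m) (c ℓ) := dist_triangle _ _ _
          _ < (S' - ε m) + (ε m + ε ℓ) := by exact add_lt_add_of_le_of_lt hym hadj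
          _ = S' + ε ℓ := by ring
      by_cases hdS : dist y' (c ℓ) ≤ S'
      · refine ⟨y', ?_⟩
        intro i hi
        rcases Finset.mem_insert.mp hi with rfl | hi'
        · linarith
        · have := hy' i hi'
          have := hε ℓ
          linarith
      · push_neg at hdS
        set d := dist y' (c ℓ) with hd
        have hd0 : 0 < d := lt_trans hS'pos hdS
        set t : ℝ := (d - S') / d with ht
        have ht0 : 0 ≤ t := div_nonneg (by linarith) hd0.le
        have ht1 : t ≤ 1 := by rw [div_le_one hd0]; linarith
        refine ⟨y' + t • (c ℓ - y'), ?_⟩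
        have hyℓ : dist (y' + t • (c ℓ - y')) (c ℓ) = S' := by
          have heq : y' + t • (c ℓ - y') - c ℓ = (1 - t) • (y' - c ℓ) := by
            module
          rw [dist_eq_norm, heq, norm_smul, Real.norm_eq_abs,
            abs_of_nonneg (by linarith : (0:ℝ) ≤ 1 - t), ← dist_eq_norm]
          rw [← hd, ht]
          field_simp
          ring
        have hyy' : dist (y' + t • (c ℓ - y')) y' = d - S' := by
          rw [dist_eq_norm]
          have heq : y' + t • (c ℓ - y') - y' = t • (c ℓ - y') := by abel
          rw [heq, norm_smul, Real.norm_eq_abs, abs_of_nonneg ht0, ← dist_eq_norm,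
            dist_comm (c ℓ) y', ← hd, ht]
          field_simp
        intro i hi
        rcases Finset.mem_insert.mp hi with rfl | hi'
        · rw [hyℓ]; linarith [hε i]
        · have h1 : dist (y' + t • (c ℓ - y')) (c i) ≤
              dist (y' + t • (c ℓ - y')) y' + dist y' (c i) := dist_triangle _ _ _
          have h2 := hy' i hi'
          rw [hyy'] at h1
          linarith

/-- **Chains of overlapping balls.** Let `P 0, …, P (n-1)` be finitely many finite
subsets of a real normed vector space `E`, each `P i` contained in the open ball of
radius `ε i > 0` about `c i`, and suppose any two of the sets are connected by a chain
of the sets in which consecutive sets share a point. Then the union of all the `P i`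
is contained in an open ball of radius `∑ i, ε i` about some point of `E`. -/
theorem chain_of_balls {E : Type*} [NormedAddCommGroup E] [NormedSpace ℝ E]
    (n : ℕ) (hn : 0 < n) (P : Fin n → Set E) (hfin : ∀ i, (P i).Finite)
    (ε : Fin n → ℝ) (hε : ∀ i, 0 < ε i) (c : Fin n → E)
    (hP : ∀ i, P i ⊆ Metric.ball (c i) (ε i))
    (hchain : ∀ i k : Fin n, ∃ (m : ℕ) (j : Fin (m + 1) → Fin n),
      j 0 = i ∧ j (Fin.last m) = k ∧
      ∀ r : Fin m, (P (j r.castSucc) ∩ P (j r.succ)).Nonempty) :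
    ∃ y : E, (⋃ i, P i) ⊆ Metric.ball y (∑ i, ε i) := by
  have h1 : GoodChain (fun i k => (P i ∩ P k).Nonempty) (Finset.univ : Finset (Fin n)) :=
    goodchain_univ hn _ hchain
  have h2 : GoodChain (fun i k => dist (c i) (c k) < ε i + ε k)
      (Finset.univ : Finset (Fin n)) := by
    refine h1.mono (fun i k ⟨p, hpi, hpk⟩ => ?_)
    have h3 : dist p (c i) < ε i := Metric.mem_ball.mp (hP i hpi)
    have h4 : dist p (c k) < ε k := Metric.mem_ball.mp (hP k hpk)
    calc dist (c i) (c k) ≤ dist (c i) p + dist p (c k) := dist_triangle _ _ _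
      _ < ε i + ε k := by rw [dist_comm (c i) p]; exact add_lt_add h3 h4
  obtain ⟨y, hy⟩ := goodchain_center ε hε c h2
  refine ⟨y, fun x hx => ?_⟩
  obtain ⟨_, ⟨i, rfl⟩, hxi⟩ := hx
  have h5 : dist x (c i) < ε i := Metric.mem_ball.mp (hP i hxi)
  have h6 : dist y (c i) ≤ (∑ j, ε j) - ε i := hy i (Finset.mem_univ i)
  rw [Metric.mem_ball]
  calc dist x y ≤ dist x (c i) + dist (c i) y := dist_triangle _ _ _
    _ = dist x (c i) + dist y (c i) := by rw [dist_comm (c i) y]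
    _ < ε i + ((∑ j, ε j) - ε i) := add_lt_add_of_lt_of_le h5 h6
    _ = ∑ j, ε j := by ring
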